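/- The function f(α) = ((1-2α)/2) ln((1-α)/α) / (Φ⁻¹(α))² tends to 1/4 as α → 0⁺. -/

import Mathlib

open Real Set Filter Topology
open MeasureTheory intervalIntegral

noncomputable def phi (y : ℝ) : ℝ := (Real.sqrt (2 * Real.pi))⁻¹ * Real.exp (-y ^ 2 / 2)

noncomputable def Phi (x : ℝ) : ℝ := ∫ y in Set.Iic x, phi y

noncomputable def PhiInv (a : ℝ) : ℝ := Function.invFun Phi a

lemma phi_pos (y : ℝ) : 0 < phi y := by
  have h : 0 < Real.sqrt (2 * Real.pi) := Real.sqrt_pos.2 (by positivity)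
  exact mul_pos (inv_pos.2 h) (Real.exp_pos _)

lemma continuous_phi : Continuous phi := by
  unfold phi; fun_prop

lemma phi_eq (y : ℝ) : phi y = (Real.sqrt (2 * Real.pi))⁻¹ * Real.exp (-(1/2) * y ^ 2) := by
  unfold phi; ring_nf

lemma integrable_phi : Integrable phi := by
  have h : Integrable (fun y : ℝ => Real.exp (-(1/2) * y ^ 2)) :=
    integrable_exp_neg_mul_sq (by norm_num)
  have := h.const_mul (Real.sqrt (2 * Real.pi))⁻¹
  exact this.congr (Filter.Eventually.of_forall fun y => (phi_eq y).symm)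

lemma integral_phi : ∫ y, phi y = 1 := by
  have h := integral_gaussian (1/2 : ℝ)
  have h2 : ∫ y : ℝ, phi y = (Real.sqrt (2 * Real.pi))⁻¹ * ∫ y : ℝ, Real.exp (-(1/2) * y ^ 2) := by
    simp_rw [phi_eq]
    exact integral_const_mul _ _
  rw [h2, h]
  have h3 : Real.pi / (1/2 : ℝ) = 2 * Real.pi := by ring
  rw [h3, inv_mul_cancel₀ (by positivity)]

lemma hasDerivAt_phi (y : ℝ) : HasDerivAt phi (-y * phi y) y := by
  have h1 : HasDerivAt (fun y : ℝ => -y ^ 2 / 2) (-y) y := by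
    have := ((hasDerivAt_pow 2 y).neg).div_const 2
    refine this.congr_deriv ?_
    simp; ring
  have h2 := (h1.exp).const_mul (Real.sqrt (2 * Real.pi))⁻¹
  refine h2.congr_deriv ?_
  unfold phi; ring

lemma tendsto_phi_atBot : Tendsto phi atBot (𝓝 0) := by
  have h1 : Tendsto (fun y : ℝ => -y ^ 2 / 2) atBot atBot := by
    apply Tendsto.atBot_div_const (by norm_num)
    apply tendsto_neg_atTop_atBot.comp
    have h : Tendsto (fun y : ℝ => (-y) ^ 2) atBot atTop :=
      (tendsto_pow_atTop (two_ne_zero)).comp tendsto_neg_atBot_atTop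
    simpa [neg_pow] using h
  have h2 := (Real.tendsto_exp_atBot.comp h1).const_mul (Real.sqrt (2 * Real.pi))⁻¹
  rw [mul_zero] at h2
  exact h2.congr fun y => rfl

lemma integrableOn_phi (s : Set ℝ) : IntegrableOn phi s := integrable_phi.integrableOn

lemma Phi_sub_Phi (x y : ℝ) : Phi y - Phi x = ∫ t in x..y, phi t :=
  integral_Iic_sub_Iic (integrableOn_phi _) (integrableOn_phi _)

lemma Phi_strictMono : StrictMono Phi := by
  intro x y hxy
  have h := Phi_sub_Phi x y
  have hpos : 0 < ∫ t in x..y, phi t :=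
    intervalIntegral_pos_of_pos (integrable_phi.intervalIntegrable) phi_pos hxy
  linarith

lemma Phi_pos (x : ℝ) : 0 < Phi x := by
  have h0 : (0:ℝ) ≤ Phi (x - 1) := setIntegral_nonneg measurableSet_Iic fun y _ => (phi_pos y).le
  have := Phi_strictMono (show x - 1 < x by linarith)
  linarith

lemma Phi_lt_one (x : ℝ) : Phi x < 1 := by
  have hsplit : Phi x + ∫ y in Ioi x, phi y = 1 := by
    rw [← integral_phi]
    exact integral_Iic_add_Ioi (integrableOn_phi _) (integrableOn_phi _)
  have hpos : 0 < ∫ y in Ioi x, phi y := by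
    have h0 : (0:ℝ) < Phi (x + 1) - Phi x := sub_pos.2 (Phi_strictMono (by linarith))
    have hsub : Phi (x+1) - Phi x = ∫ t in x..(x+1), phi t := Phi_sub_Phi x (x+1)
    have hle : ∫ t in x..(x+1), phi t ≤ ∫ y in Ioi x, phi y := by
      rw [intervalIntegral.integral_of_le (by linarith)]
      apply setIntegral_mono_set (integrableOn_phi _)
        (Filter.Eventually.of_forall fun y => (phi_pos y).le)
      exact Filter.Eventually.of_forall fun y hy => hy.1
    linarith
  linarith

lemma continuous_Phi : Continuous Phi := by
  have h : Phi = fun x => Phi 0 + ∫ t in (0:ℝ)..x, phi t := by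
    funext x
    have := Phi_sub_Phi 0 x
    linarith
  rw [h]
  exact continuous_const.add
    (intervalIntegral.continuous_primitive (fun a b => integrable_phi.intervalIntegrable) 0)

lemma tendsto_Phi_atBot : Tendsto Phi atBot (𝓝 0) := by
  have h := intervalIntegral_tendsto_integral_Iic (0:ℝ) (integrableOn_phi _) (tendsto_id (α := ℝ))
  have h2 : Tendsto (fun a : ℝ => Phi 0 - ∫ t in a..(0:ℝ), phi t) atBot (𝓝 (Phi 0 - Phi 0)) :=
    tendsto_const_nhds.sub h
  rw [sub_self] at h2
  apply h2.congr
  intro a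
  have := Phi_sub_Phi a 0
  linarith

lemma PhiInv_Phi (x : ℝ) : PhiInv (Phi x) = x :=
  Function.leftInverse_invFun Phi_strictMono.injective x

lemma map_Phi_atBot : Filter.map Phi atBot = 𝓝[>] (0:ℝ) := by
  apply le_antisymm
  · exact tendsto_nhdsWithin_of_tendsto_nhds_of_eventually_within Phi tendsto_Phi_atBot
      (Filter.Eventually.of_forall fun x => Phi_pos x)
  · intro s hs
    rw [Filter.mem_map, Filter.mem_atBot_sets] at hs
    obtain ⟨x, hx⟩ := hs
    apply Filter.mem_of_superset (Ioo_mem_nhdsGT_of_mem ⟨le_refl 0, Phi_pos x⟩)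
    intro a ha
    obtain ⟨ha0, hax⟩ := ha
    -- find y0 ≤ x with Phi y0 < a
    have h1 : ∀ᶠ y in atBot, Phi y < a := tendsto_Phi_atBot.eventually_lt_const ha0
    obtain ⟨y1, hy1⟩ := h1.exists
    set y0 := min y1 x with hy0def
    have hy0a : Phi y0 < a := lt_of_le_of_lt
      (Phi_strictMono.monotone (min_le_left _ _)) hy1
    have hy0x : y0 ≤ x := min_le_right _ _
    have hIVT := intermediate_value_Icc hy0x continuous_Phi.continuousOn
    have haI : a ∈ Icc (Phi y0) (Phi x) := ⟨hy0a.le, hax.le⟩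
    obtain ⟨y, hyI, hya⟩ := hIVT haI
    rw [← hya]
    exact hx y (hyI.2)

lemma integrable_mul_phi : Integrable (fun y : ℝ => y * phi y) := by
  have h : Integrable (fun y : ℝ => y ^ (1:ℝ) * Real.exp (-(1/2) * y ^ 2)) :=
    integrable_rpow_mul_exp_neg_mul_sq (by norm_num) (by norm_num)
  have h2 := h.const_mul (Real.sqrt (2 * Real.pi))⁻¹
  apply h2.congr
  apply Filter.Eventually.of_forall
  intro y
  simp only [phi_eq, Real.rpow_one]
  ring

lemma integral_Iic_neg_mul_phi (x : ℝ) : ∫ y in Iic x, (-y) * phi y = phi x := by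
  have h := integral_Iic_of_hasDerivAt_of_tendsto' (f := phi)
    (f' := fun y => -y * phi y) (a := x) (m := 0)
    (fun y _ => hasDerivAt_phi y)
    ((integrable_mul_phi.neg.congr (Filter.Eventually.of_forall fun y => by simp [neg_mul])).integrableOn)
    tendsto_phi_atBot
  simpa using h

lemma Phi_le_upper {x : ℝ} (hx : x < 0) : Phi x ≤ phi x / (-x) := by
  have hmono : Phi x ≤ ∫ y in Iic x, (y / x) * phi y := by
    apply setIntegral_mono_on (integrableOn_phi _)
    · exact ((integrable_mul_phi.const_mul (x⁻¹)).congr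
        (Filter.Eventually.of_forall fun y => by ring)).integrableOn
    · exact measurableSet_Iic
    · intro y hy
      have h1 : (1:ℝ) ≤ y / x := (le_div_iff_of_neg hx).2 (by simpa using hy.out)
      calc phi y = 1 * phi y := (one_mul _).symm
        _ ≤ (y / x) * phi y := mul_le_mul_of_nonneg_right h1 (phi_pos y).le
  have hcomp : ∫ y in Iic x, (y / x) * phi y = phi x / (-x) := by
    have h1 : ∀ y : ℝ, (y / x) * phi y = (-x)⁻¹ * ((-y) * phi y) := by
      intro y; field_simp
    simp_rw [h1]
    rw [MeasureTheory.integral_const_mul, integral_Iic_neg_mul_phi, inv_mul_eq_div]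
  exact hmono.trans hcomp.le

lemma lower_le_Phi (x : ℝ) : (-x) * phi x / (x ^ 2 + 1) ≤ Phi x := by
  set G : ℝ → ℝ := fun y => y * phi y / (y ^ 2 + 1) with hG
  have hden : ∀ y : ℝ, y ^ 2 + 1 ≠ 0 := fun y => by positivity
  have hderiv : ∀ y : ℝ, HasDerivAt G (2 * phi y / (y ^ 2 + 1) ^ 2 - phi y) y := by
    intro y
    have hu : HasDerivAt (fun y : ℝ => y * phi y) (1 * phi y + y * (-y * phi y)) y :=
      (hasDerivAt_id y).mul (hasDerivAt_phi y)
    have hv : HasDerivAt (fun y : ℝ => y ^ 2 + 1) (2 * y) y := by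
      simpa using (hasDerivAt_pow 2 y).add_const 1
    have h := hu.div hv (hden y)
    refine h.congr_deriv ?_
    field_simp
    ring
  have hGbd : ∀ y : ℝ, ‖G y‖ ≤ phi y := by
    intro y
    rw [hG]
    simp only [norm_div, norm_mul, Real.norm_eq_abs]
    rw [abs_of_pos (phi_pos y), abs_of_pos (show (0:ℝ) < y ^ 2 + 1 by positivity)]
    rw [div_le_iff₀ (show (0:ℝ) < y ^ 2 + 1 by positivity)]
    have h1 : |y| ≤ y ^ 2 + 1 := by nlinarith [sq_abs y, abs_nonneg y]
    nlinarith [phi_pos y, abs_nonneg y]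
  have hGtend : Tendsto G atBot (𝓝 0) :=
    squeeze_zero_norm hGbd tendsto_phi_atBot
  have hint2 : Integrable (fun y : ℝ => 2 * phi y / (y ^ 2 + 1) ^ 2) := by
    apply Integrable.mono (integrable_phi.const_mul 2)
    · exact ((continuous_const.mul continuous_phi).div
        (by continuity) (fun y => by positivity)).aestronglyMeasurable
    · apply Filter.Eventually.of_forall
      intro y
      have hden1 : (1:ℝ) ≤ (y ^ 2 + 1) ^ 2 := by nlinarith [sq_nonneg y]
      rw [norm_div, Real.norm_eq_abs ((y ^ 2 + 1) ^ 2),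
        abs_of_pos (show (0:ℝ) < (y ^ 2 + 1) ^ 2 by positivity)]
      exact div_le_self (norm_nonneg _) hden1
  have hintG' : IntegrableOn (fun y : ℝ => 2 * phi y / (y ^ 2 + 1) ^ 2 - phi y) (Iic x) :=
    (hint2.sub integrable_phi).integrableOn
  have hFTC := integral_Iic_of_hasDerivAt_of_tendsto' (f := G)
    (f' := fun y => 2 * phi y / (y ^ 2 + 1) ^ 2 - phi y) (a := x) (m := 0)
    (fun y _ => hderiv y) hintG' hGtend
  rw [sub_zero] at hFTC
  have hsplit : ∫ y in Iic x, (2 * phi y / (y ^ 2 + 1) ^ 2 - phi y)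
      = (∫ y in Iic x, 2 * phi y / (y ^ 2 + 1) ^ 2) - Phi x :=
    integral_sub hint2.integrableOn (integrableOn_phi _)
  have hnonneg : 0 ≤ ∫ y in Iic x, 2 * phi y / (y ^ 2 + 1) ^ 2 :=
    setIntegral_nonneg measurableSet_Iic fun y _ => by have := (phi_pos y).le; positivity
  have hGx : G x = x * phi x / (x ^ 2 + 1) := rfl
  have : (-x) * phi x / (x ^ 2 + 1) = -(G x) := by rw [hGx]; ring
  rw [this]
  rw [hsplit] at hFTC
  linarith

lemma sq_tendsto_atBot : Tendsto (fun y : ℝ => y ^ 2) atBot atTop := by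
  have h : Tendsto (fun y : ℝ => (-y) ^ 2) atBot atTop :=
    (tendsto_pow_atTop (two_ne_zero)).comp tendsto_neg_atBot_atTop
  simpa [neg_pow] using h

lemma inv_sq_tendsto : Tendsto (fun x : ℝ => (x ^ 2)⁻¹) atBot (𝓝 0) :=
  tendsto_inv_atTop_zero.comp sq_tendsto_atBot

lemma log_div_sq_atTop : Tendsto (fun t : ℝ => Real.log t / t ^ 2) atTop (𝓝 0) := by
  have h1 : Tendsto (fun t : ℝ => Real.log t / t) atTop (𝓝 0) := by
    have := Real.tendsto_pow_log_div_mul_add_atTop 1 0 1 one_ne_zero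
    simpa using this
  have h2 := h1.mul tendsto_inv_atTop_zero
  rw [mul_zero] at h2
  apply h2.congr
  intro t
  ring

lemma log_neg_div_sq : Tendsto (fun x : ℝ => Real.log (-x) / x ^ 2) atBot (𝓝 0) := by
  have h := log_div_sq_atTop.comp tendsto_neg_atBot_atTop
  apply h.congr
  intro x
  simp only [Function.comp_apply, neg_sq]

lemma log_sq_add_one_div_sq :
    Tendsto (fun x : ℝ => Real.log (x ^ 2 + 1) / x ^ 2) atBot (𝓝 0) := by
  have hup : Tendsto (fun x : ℝ => Real.log 2 * (x ^ 2)⁻¹ + 2 * (Real.log (-x) / x ^ 2))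
      atBot (𝓝 0) := by
    have h1 := (tendsto_const_nhds (x := Real.log 2) (f := atBot (α := ℝ))).mul inv_sq_tendsto
    have h2 := (tendsto_const_nhds (x := (2:ℝ)) (f := atBot (α := ℝ))).mul log_neg_div_sq
    have := h1.add h2
    simpa using this
  apply tendsto_of_tendsto_of_tendsto_of_le_of_le' tendsto_const_nhds hup
  · filter_upwards [Iic_mem_atBot (-1 : ℝ)] with x hx
    have hx' : x ≤ -1 := hx
    have hx2 : (0:ℝ) < x ^ 2 := by nlinarith
    have hlg : 0 ≤ Real.log (x ^ 2 + 1) := Real.log_nonneg (by nlinarith)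
    positivity
  · filter_upwards [Iic_mem_atBot (-1 : ℝ)] with x hx
    have hx' : x ≤ -1 := hx
    have hx0 : x < 0 := by linarith
    have hx2 : (1:ℝ) ≤ x ^ 2 := by nlinarith [hx', hx0]
    have hle : Real.log (x ^ 2 + 1) ≤ Real.log 2 + 2 * Real.log (-x) := by
      have h1 : x ^ 2 + 1 ≤ 2 * x ^ 2 := by nlinarith
      have h2 : Real.log (x ^ 2 + 1) ≤ Real.log (2 * x ^ 2) :=
        (Real.log_le_log_iff (by positivity) (by positivity)).2 h1
      have h3 : Real.log (2 * x ^ 2) = Real.log 2 + 2 * Real.log (-x) := by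
        rw [Real.log_mul two_ne_zero (by positivity), Real.log_pow]
        rw [← Real.log_neg_eq_log x]
        push_cast
        ring
      linarith
    have hx2' : (0:ℝ) < x ^ 2 := by linarith
    rw [div_le_iff₀ hx2']
    calc Real.log (x ^ 2 + 1) ≤ Real.log 2 + 2 * Real.log (-x) := hle
      _ = (Real.log 2 * (x ^ 2)⁻¹ + 2 * (Real.log (-x) / x ^ 2)) * x ^ 2 := by
          field_simp
          rw [mul_div_cancel_left₀ _ hx0.ne]

lemma tendsto_log_Phi_div_sq :
    Tendsto (fun x : ℝ => Real.log (Phi x) / x ^ 2) atBot (𝓝 (-(1/2))) := by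
  set c : ℝ := (Real.sqrt (2 * Real.pi))⁻¹ with hc
  have hc0 : 0 < c := by rw [hc]; positivity
  have hlogphi : ∀ x : ℝ, Real.log (phi x) = Real.log c + (-x ^ 2 / 2) := by
    intro x
    unfold phi
    rw [Real.log_mul hc0.ne' (Real.exp_ne_zero _), Real.log_exp]
  -- lower bound function
  have hlow : Tendsto (fun x : ℝ =>
      Real.log c * (x ^ 2)⁻¹ - 1/2 + Real.log (-x) / x ^ 2 - Real.log (x ^ 2 + 1) / x ^ 2)
      atBot (𝓝 (-(1/2))) := by
    have h1 := (tendsto_const_nhds (x := Real.log c) (f := atBot (α := ℝ))).mul inv_sq_tendsto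
    have h := ((h1.sub (tendsto_const_nhds (x := (1:ℝ)/2))).add log_neg_div_sq).sub
      log_sq_add_one_div_sq
    simpa using h
  have hup : Tendsto (fun x : ℝ =>
      Real.log c * (x ^ 2)⁻¹ - 1/2 - Real.log (-x) / x ^ 2) atBot (𝓝 (-(1/2))) := by
    have h1 := (tendsto_const_nhds (x := Real.log c) (f := atBot (α := ℝ))).mul inv_sq_tendsto
    have h := (h1.sub (tendsto_const_nhds (x := (1:ℝ)/2))).sub log_neg_div_sq
    simpa using h
  apply tendsto_of_tendsto_of_tendsto_of_le_of_le' hlow hup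
  · filter_upwards [Iic_mem_atBot (-1 : ℝ)] with x hx
    have hx' : x ≤ -1 := hx
    have hx0 : (0:ℝ) < -x := by linarith
    have hx2 : (0:ℝ) < x ^ 2 := by nlinarith
    have hphi := phi_pos x
    have hpos : (0:ℝ) < (-x) * phi x / (x ^ 2 + 1) := by positivity
    have hlog : Real.log ((-x) * phi x / (x ^ 2 + 1)) ≤ Real.log (Phi x) :=
      (Real.log_le_log_iff hpos (Phi_pos x)).2 (lower_le_Phi x)
    have hexp : Real.log ((-x) * phi x / (x ^ 2 + 1)) =
        Real.log (-x) + (Real.log c + (-x ^ 2 / 2)) - Real.log (x ^ 2 + 1) := by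
      rw [Real.log_div (mul_pos hx0 hphi).ne' (by positivity),
        Real.log_mul hx0.ne' hphi.ne', hlogphi]
    rw [hexp] at hlog
    have heq : Real.log c * (x ^ 2)⁻¹ - 1/2 + Real.log (-x) / x ^ 2
        - Real.log (x ^ 2 + 1) / x ^ 2
        = (Real.log (-x) + (Real.log c + (-x ^ 2 / 2)) - Real.log (x ^ 2 + 1)) / x ^ 2 := by
      field_simp [hx0.ne', neg_ne_zero.1 hx0.ne']
      ring
    rw [heq]
    gcongr
  · filter_upwards [Iic_mem_atBot (-1 : ℝ)] with x hx
    have hx' : x ≤ -1 := hx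
    have hx0 : (0:ℝ) < -x := by linarith
    have hx2 : (0:ℝ) < x ^ 2 := by nlinarith
    have hphi := phi_pos x
    have hpos : (0:ℝ) < phi x / (-x) := by positivity
    have hlog : Real.log (Phi x) ≤ Real.log (phi x / (-x)) :=
      (Real.log_le_log_iff (Phi_pos x) hpos).2 (Phi_le_upper (by linarith))
    have hexp : Real.log (phi x / (-x)) = (Real.log c + (-x ^ 2 / 2)) - Real.log (-x) := by
      rw [Real.log_div hphi.ne' hx0.ne', hlogphi]
    rw [hexp] at hlog
    have heq : Real.log c * (x ^ 2)⁻¹ - 1/2 - Real.log (-x) / x ^ 2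
        = ((Real.log c + (-x ^ 2 / 2)) - Real.log (-x)) / x ^ 2 := by
      field_simp [hx0.ne', neg_ne_zero.1 hx0.ne']
      ring
    rw [heq]
    gcongr

theorem f_limit_zero :
    Filter.Tendsto
      (fun α : ℝ => ((1 - 2 * α) / 2 * Real.log ((1 - α) / α)) / (PhiInv α) ^ 2)
      (𝓝[>] 0) (𝓝 (1 / 4)) := by
  rw [← map_Phi_atBot, Filter.tendsto_map'_iff]
  have hT : Tendsto (fun x : ℝ => (1 - 2 * Phi x) / 2 *
      (Real.log (1 - Phi x) * (x ^ 2)⁻¹ - Real.log (Phi x) / x ^ 2))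
      atBot (𝓝 ((1 - 2 * 0) / 2 * (Real.log (1 - 0) * 0 - -(1/2)))) := by
    have h1 : Tendsto (fun x : ℝ => (1 - 2 * Phi x) / 2) atBot (𝓝 ((1 - 2 * 0) / 2)) :=
      (tendsto_const_nhds.sub (tendsto_Phi_atBot.const_mul 2)).div_const 2
    have h2 : Tendsto (fun x : ℝ => Real.log (1 - Phi x)) atBot (𝓝 (Real.log (1 - 0))) :=
      (Real.continuousAt_log (by norm_num)).tendsto.comp
        (tendsto_const_nhds.sub tendsto_Phi_atBot)
    exact h1.mul ((h2.mul inv_sq_tendsto).sub tendsto_log_Phi_div_sq)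
  have hT' : Tendsto (fun x : ℝ => (1 - 2 * Phi x) / 2 *
      (Real.log (1 - Phi x) * (x ^ 2)⁻¹ - Real.log (Phi x) / x ^ 2))
      atBot (𝓝 (1 / 4)) := by
    convert hT using 2
    norm_num
  apply hT'.congr
  intro x
  have h0 : Phi x ≠ 0 := (Phi_pos x).ne'
  have h1 : (1:ℝ) - Phi x ≠ 0 := by have := Phi_lt_one x; intro h; rw [sub_eq_zero] at h; linarith
  simp only [Function.comp_apply, PhiInv_Phi]
  rw [Real.log_div h1 h0]
  ring
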